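/- (Lemma 1) With the time-varying channel h_{l}(n) = Σ_{p=1}^{P} h_p·e^{j2πν_p n T_s}·δ(lT_s - τ_p) (a single antenna, single user version), the delay-Doppler received signal Σ_{n=1}^{N_D} (1/N_D)·e^{-j2π(n-1)(j-j')/N_D}·h_{(i-i')_{L_D}}((n-1)(L_D+L_cp)+i+1) equals h̃_{(i-i')_{L_D}, j-j'} + g̃^{i}_{(i-i')_{L_D}, j-j'}, where h̃_{i,j} = (1/N_D)Σ_p h_p·e^{j2πν_p T_s}·Υ_{N_D}(ν_p N_D T - j)·δ(iT_s - τ_p) and g̃^{ℓ}_{i,j} = (1/N_D)Σ_p 2j·e^{jπν_p ℓ T_s}·sin(πν_p ℓ T_s)·h_p·e^{j2πν_p T_s}·Υ_{N_D}(ν_p N_D T - j)·δ(iT_s - τ_p). -/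
import Mathlib


open Real Complex Finset

lemma sin_aux (θ : ℝ) : (1:ℂ) + 2*Complex.I*Complex.exp (θ*Complex.I)*(Real.sin θ : ℂ)
    = Complex.exp (2*θ*Complex.I) := by
  have h1 : Complex.exp ((2:ℂ)*θ*Complex.I) = Complex.exp (θ*Complex.I) * Complex.exp (θ*Complex.I) := by
    rw [← Complex.exp_add]; ring_nf
  rw [h1, Complex.exp_mul_I]
  have h2 := Complex.cos_sq_add_sin_sq (θ:ℂ)
  rw [Complex.ofReal_sin]
  have hI := Complex.I_mul_I
  linear_combination -h2 + (Complex.sin (θ:ℂ))^2 * hI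

/-- Υ_N(x) = Σ_{n=1}^{N} exp(j·2π·(x/N)·(n-1)). -/
noncomputable def Upsilon (N : ℕ) (x : ℝ) : ℂ :=
  ∑ n ∈ Finset.range N, Complex.exp (2 * Real.pi * (x / N) * n * Complex.I)

theorem lemma1_delay_doppler
    (P LD Lcp ND : ℕ) (hP : 0 < P) (hLD : 0 < LD) (hLcp : 0 < Lcp) (hND : 0 < ND)
    (Ts : ℝ) (hTs : 0 < Ts)
    (h : Fin P → ℂ) (ν : Fin P → ℝ) (nτ : Fin P → ℤ)
    (τ : Fin P → ℝ) (hτ : ∀ p, τ p = (nτ p : ℝ) * Ts)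
    -- T = (L_D + L_cp) T_s
    (T : ℝ) (hT : T = ((LD : ℝ) + Lcp) * Ts)
    -- time-varying channel h_l(n) = Σ_p h_p e^{j2πν_p n T_s} δ(l T_s - τ_p)
    (hch : ℤ → ℤ → ℂ)
    (hhch : ∀ l n : ℤ, hch l n =
      ∑ p, h p * Complex.exp (2 * Real.pi * ν p * n * Ts * Complex.I) *
        (if (l : ℝ) * Ts = τ p then 1 else 0))
    -- main delay-Doppler channel h̃_{i,j}
    (htil : ℤ → ℤ → ℂ)
    (hhtil : ∀ i j : ℤ, htil i j =
      (1 / (ND : ℂ)) * ∑ p, h p * Complex.exp (2 * Real.pi * ν p * Ts * Complex.I) *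
        Upsilon ND (ν p * ND * T - j) * (if (i : ℝ) * Ts = τ p then 1 else 0))
    -- secondary delay-Doppler channel g̃^ℓ_{i,j}
    (gtil : ℤ → ℤ → ℤ → ℂ)
    (hgtil : ∀ ℓ i j : ℤ, gtil ℓ i j =
      (1 / (ND : ℂ)) * ∑ p,
        2 * Complex.I * Complex.exp (Real.pi * ν p * ℓ * Ts * Complex.I) *
          (Real.sin (Real.pi * ν p * ℓ * Ts) : ℂ) *
        h p * Complex.exp (2 * Real.pi * ν p * Ts * Complex.I) *
        Upsilon ND (ν p * ND * T - j) * (if (i : ℝ) * Ts = τ p then 1 else 0))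
    (i i' j j' : ℤ) :
    ∑ n ∈ Finset.range ND,
        (1 / (ND : ℂ)) * Complex.exp (-(2 * Real.pi * n * ((j : ℝ) - j') / ND) * Complex.I) *
          hch ((i - i') % LD) (n * ((LD : ℤ) + Lcp) + i + 1) =
      htil ((i - i') % LD) (j - j') + gtil i ((i - i') % LD) (j - j') := by
  rw [hhtil, hgtil]
  simp only [hhch]
  rw [← mul_add, ← Finset.sum_add_distrib, Finset.mul_sum]
  simp only [Finset.mul_sum]
  rw [Finset.sum_comm]
  refine Finset.sum_congr rfl fun p _ => ?_
  by_cases hδ : ((((i - i') % LD : ℤ) : ℝ)) * Ts = τ p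
  · simp only [if_pos hδ, mul_one]
    have hND' : (ND : ℂ) ≠ 0 := Nat.cast_ne_zero.mpr hND.ne'
    have hs := sin_aux (Real.pi * ν p * i * Ts)
    have key : ∀ n ∈ Finset.range ND,
        1 / (ND:ℂ) * Complex.exp (-(2 * (Real.pi:ℂ) * n * (((j:ℝ):ℂ) - ((j':ℤ):ℂ)) / ND) * Complex.I) *
          (h p * Complex.exp (2 * (Real.pi:ℂ) * (ν p : ℂ) * ((n * ((LD:ℤ) + Lcp) + i + 1 : ℤ) : ℂ) * Ts * Complex.I)) =
        (1 / (ND:ℂ) * h p * Complex.exp (2 * ((Real.pi * ν p * i * Ts : ℝ) : ℂ) * Complex.I) *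
          Complex.exp (2 * (Real.pi:ℂ) * (ν p : ℂ) * (Ts:ℂ) * Complex.I)) *
          Complex.exp (2 * (Real.pi:ℂ) * (((ν p * ND * T - ((j - j' : ℤ) : ℝ) : ℝ) : ℂ) / (ND:ℂ)) * n * Complex.I) := by
      intro n _
      have hexp : Complex.exp (-(2 * (Real.pi:ℂ) * n * (((j:ℝ):ℂ) - ((j':ℤ):ℂ)) / ND) * Complex.I) *
          Complex.exp (2 * (Real.pi:ℂ) * (ν p : ℂ) * ((n * ((LD:ℤ) + Lcp) + i + 1 : ℤ) : ℂ) * Ts * Complex.I) =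
          Complex.exp (2 * ((Real.pi * ν p * i * Ts : ℝ) : ℂ) * Complex.I) *
          Complex.exp (2 * (Real.pi:ℂ) * (ν p : ℂ) * (Ts:ℂ) * Complex.I) *
          Complex.exp (2 * (Real.pi:ℂ) * (((ν p * ND * T - ((j - j' : ℤ) : ℝ) : ℝ) : ℂ) / (ND:ℂ)) * n * Complex.I) := by
        rw [← Complex.exp_add, ← Complex.exp_add, ← Complex.exp_add]
        congr 1
        rw [hT]
        push_cast
        field_simp
        ring
      calc 1 / (ND:ℂ) * Complex.exp (-(2 * (Real.pi:ℂ) * n * (((j:ℝ):ℂ) - ((j':ℤ):ℂ)) / ND) * Complex.I) *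
          (h p * Complex.exp (2 * (Real.pi:ℂ) * (ν p : ℂ) * ((n * ((LD:ℤ) + Lcp) + i + 1 : ℤ) : ℂ) * Ts * Complex.I))
          = 1 / (ND:ℂ) * h p *
            (Complex.exp (-(2 * (Real.pi:ℂ) * n * (((j:ℝ):ℂ) - ((j':ℤ):ℂ)) / ND) * Complex.I) *
             Complex.exp (2 * (Real.pi:ℂ) * (ν p : ℂ) * ((n * ((LD:ℤ) + Lcp) + i + 1 : ℤ) : ℂ) * Ts * Complex.I)) := by ring
        _ = _ := by rw [hexp]; ring
    rw [Finset.sum_congr rfl key, ← Finset.mul_sum]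
    rw [show (∑ n ∈ Finset.range ND,
        Complex.exp (2 * (Real.pi:ℂ) * (((ν p * ND * T - ((j - j' : ℤ) : ℝ) : ℝ) : ℂ) / (ND:ℂ)) * n * Complex.I)) =
        Upsilon ND (ν p * ND * T - ((j - j' : ℤ) : ℝ)) from rfl]
    have eB : Complex.exp ((Real.pi:ℂ) * ((ν p : ℝ):ℂ) * ((i:ℤ):ℂ) * (Ts:ℂ) * Complex.I)
        = Complex.exp (((Real.pi * ν p * (i:ℝ) * Ts : ℝ):ℂ) * Complex.I) := by
      congr 1; push_cast; ring
    rw [eB, ← hs]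
    ring
  · simp [hδ]
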